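/- For n ≥ 2 and the Choi map Φ(A) = (n-1)·Tr(A)·I_n − A on M_n(ℂ), the block matrix [Φ(e_{ij})]_{i,j=1}^{n-1} ∈ M_{n-1}(ℂ) ⊗ M_n(ℂ) is positive semi-definite, with eigenvalues 0 (multiplicity 1) and n−1 (multiplicity n(n-1)−1). -/

import Mathlib

open Matrix Polynomial ComplexOrder

/-- The Choi map `A ↦ (n-1)·Tr(A)·I − A` on `M_n(ℂ)`. -/
noncomputable def choiMap (n : ℕ) (A : Matrix (Fin n) (Fin n) ℂ) :
    Matrix (Fin n) (Fin n) ℂ :=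
  (((n : ℂ) - 1) * A.trace) • (1 : Matrix (Fin n) (Fin n) ℂ) - A

/-- The `(n-1)`-block matrix `[Φ(e_{ij})]_{i,j=1}^{n-1}` of the Choi map,
as an element of `M_{n-1}(ℂ) ⊗ M_n(ℂ)`. -/
noncomputable def choiMapBlock (n : ℕ) :
    Matrix (Fin (n - 1) × Fin n) (Fin (n - 1) × Fin n) ℂ :=
  fun p q =>
    choiMap n (Matrix.single (Fin.castLE (Nat.sub_le n 1) p.1)
      (Fin.castLE (Nat.sub_le n 1) q.1) 1) p.2 q.2

namespace ChoiAux

noncomputable def v (n : ℕ) : Fin (n - 1) × Fin n → ℂ :=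
  fun p => if (Fin.castLE (Nat.sub_le n 1) p.1 : Fin n) = p.2 then 1 else 0

noncomputable def W (n : ℕ) : Matrix (Fin (n - 1) × Fin n) (Fin (n - 1) × Fin n) ℂ :=
  replicateCol Unit (v n) * replicateRow Unit (v n)

lemma W_apply (n : ℕ) (p q) : W n p q = v n p * v n q := by
  simp [W, Matrix.mul_apply]

lemma trace_std (n : ℕ) (a b : Fin n) :
    (Matrix.single a b (1 : ℂ)).trace = if a = b then 1 else 0 := by
  by_cases h : a = b
  · subst h; simp [Matrix.trace_single_eq_same]
  · simp [h, Matrix.trace_single_eq_of_ne a b (1:ℂ) h]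

lemma block_eq (n : ℕ) :
    choiMapBlock n = ((n : ℂ) - 1) • 1 - W n := by
  ext ⟨i, k⟩ ⟨j, l⟩
  have hcast : (Fin.castLE (Nat.sub_le n 1) i : Fin n) = Fin.castLE (Nat.sub_le n 1) j ↔ i = j := by
    constructor
    · intro h; exact Fin.ext (by simpa [Fin.ext_iff] using h)
    · rintro rfl; rfl
  simp only [choiMapBlock, choiMap, Matrix.sub_apply, Matrix.smul_apply, smul_eq_mul, W_apply]
  rw [trace_std, if_congr hcast rfl rfl]
  simp only [Matrix.single, Matrix.of_apply, Matrix.one_apply, Prod.mk.injEq, v]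
  by_cases hij : i = j <;> by_cases hkl : k = l <;>
    by_cases hik : (Fin.castLE (Nat.sub_le n 1) i : Fin n) = k <;>
    by_cases hjl : (Fin.castLE (Nat.sub_le n 1) j : Fin n) = l <;>
    subst_vars <;> simp_all

lemma dot_v (n : ℕ) (hn : 1 ≤ n) : v n ⬝ᵥ v n = ((n : ℂ) - 1) := by
  unfold dotProduct v
  rw [Fintype.sum_prod_type]
  have : ∀ i : Fin (n - 1),
      (∑ k : Fin n, (if (Fin.castLE (Nat.sub_le n 1) i : Fin n) = k then (1:ℂ) else 0) *
        (if (Fin.castLE (Nat.sub_le n 1) i : Fin n) = k then 1 else 0)) = 1 := by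
    intro i
    rw [Finset.sum_eq_single (Fin.castLE (Nat.sub_le n 1) i)]
    · simp
    · intro b _ hb; simp [Ne.symm hb]
    · simp
  rw [Finset.sum_congr rfl fun i _ => this i]
  simp
  push_cast [Nat.cast_sub hn]
  ring

lemma W_mul_W (n : ℕ) (hn : 1 ≤ n) : W n * W n = ((n : ℂ) - 1) • W n := by
  ext p q
  rw [Matrix.mul_apply]
  simp only [W_apply, Matrix.smul_apply, smul_eq_mul]
  calc ∑ r, (v n p * v n r) * (v n r * v n q)
      = (v n p * v n q) * ∑ r, v n r * v n r := by
        rw [Finset.mul_sum]; exact Finset.sum_congr rfl fun r _ => by ring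
    _ = ((n : ℂ) - 1) * (v n p * v n q) := by
        rw [show ∑ r, v n r * v n r = v n ⬝ᵥ v n from rfl, dot_v n hn]; ring

lemma W_herm (n : ℕ) : (W n)ᴴ = W n := by
  ext p q
  simp only [Matrix.conjTranspose_apply, W_apply, v]
  by_cases h1 : (Fin.castLE (Nat.sub_le n 1) q.1 : Fin n) = q.2 <;>
    by_cases h2 : (Fin.castLE (Nat.sub_le n 1) p.1 : Fin n) = p.2 <;> simp [h1, h2]


lemma eval_charpoly' {m : Type*} [Fintype m] [DecidableEq m] (M : Matrix m m ℂ) (t : ℂ) :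
    (M.charpoly).eval t = (t • (1 : Matrix m m ℂ) - M).det := by
  rw [Matrix.charpoly, ← Polynomial.coe_evalRingHom, RingHom.map_det]
  congr 1
  ext i j
  simp [Matrix.charmatrix_apply, Matrix.one_apply, Matrix.diagonal_apply, apply_ite]

lemma det_key (n : ℕ) (hn : 2 ≤ n) (t : ℂ) (ht : t ≠ (n : ℂ) - 1) :
    (t • (1 : Matrix (Fin (n-1) × Fin n) (Fin (n-1) × Fin n) ℂ) - choiMapBlock n).det
      = t * (t - ((n : ℂ) - 1)) ^ (n * (n - 1) - 1) := by
  set c : ℂ := t - ((n : ℂ) - 1) with hc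
  have hc0 : c ≠ 0 := sub_ne_zero.mpr ht
  have h1 : t • (1 : Matrix (Fin (n-1) × Fin n) (Fin (n-1) × Fin n) ℂ) - choiMapBlock n
      = c • (1 + replicateCol Unit (c⁻¹ • v n) * replicateRow Unit (v n)) := by
    rw [block_eq]
    have : replicateCol Unit (c⁻¹ • v n) = c⁻¹ • replicateCol Unit (v n) := by ext p u; simp
    rw [this, Matrix.smul_mul, smul_add, smul_smul, mul_inv_cancel₀ hc0, one_smul]
    show _ = c • 1 + W n
    module
  rw [h1, Matrix.det_smul, Matrix.det_one_add_replicateCol_mul_replicateRow, dotProduct_smul,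
    show v n ⬝ᵥ v n = (n : ℂ) - 1 from dot_v n (by omega)]
  have hcard : Fintype.card (Fin (n-1) × Fin n) = n * (n - 1) := by
    simp [Fintype.card_prod, Nat.mul_comm]
  rw [hcard]
  have hd : n * (n - 1) = (n * (n - 1) - 1) + 1 := by
    have : 1 ≤ n * (n - 1) := by
      have : 1 ≤ n - 1 := by omega
      nlinarith [hn]
    omega
  rw [hd, pow_succ]
  field_simp
  rw [Nat.add_sub_cancel, smul_eq_mul]
  have hcc : c * (1 / c) = 1 := mul_one_div_cancel hc0
  linear_combination (c ^ (n * (n - 1) - 1) * ((n:ℂ) - 1)) * hcc + c ^ (n * (n - 1) - 1) * hc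

lemma posSemidef (n : ℕ) (hn : 2 ≤ n) : (choiMapBlock n).PosSemidef := by
  have hc0 : ((n : ℂ) - 1) ≠ 0 := by
    intro h
    have : (n : ℂ) = 1 := by linear_combination h
    have : (n : ℕ) = 1 := by exact_mod_cast this
    omega
  set a : ℂ := ((n : ℂ) - 1)⁻¹ with ha
  set Q : Matrix (Fin (n-1) × Fin n) (Fin (n-1) × Fin n) ℂ := 1 - a • W n with hQ
  set r : ℂ := (Real.sqrt ((n : ℝ) - 1) : ℂ) with hr
  have hQQ : Q * Q = Q := by
    have h2 : W n * a • W n = W n := by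
      rw [Matrix.mul_smul, W_mul_W n (by omega), smul_smul,
        show a * ((n:ℂ) - 1) = 1 by rw [ha]; field_simp, one_smul]
    rw [hQ, Matrix.sub_mul, Matrix.mul_sub, Matrix.mul_sub]
    simp only [Matrix.one_mul, Matrix.mul_one, Matrix.smul_mul, h2]
    abel
  have hQH : Qᴴ = Q := by
    rw [hQ, Matrix.conjTranspose_sub, Matrix.conjTranspose_smul, Matrix.conjTranspose_one,
      W_herm]
    congr 1
    rw [ha, star_inv₀]
    congr 1
    simp [star_sub]
  have hrr : star r * r = (n : ℂ) - 1 := by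
    rw [hr, Complex.star_def, Complex.conj_ofReal, ← Complex.ofReal_mul,
      Real.mul_self_sqrt (by linarith [show (2:ℝ) ≤ (n:ℝ) from by exact_mod_cast hn])]
    push_cast
    ring
  set B : Matrix (Fin (n-1) × Fin n) (Fin (n-1) × Fin n) ℂ := r • Q with hB
  have hBB : Bᴴ * B = choiMapBlock n := by
    rw [hB, Matrix.conjTranspose_smul, hQH, Matrix.smul_mul, Matrix.mul_smul, smul_smul,
      hQQ, hrr, block_eq, hQ, smul_sub, smul_smul, mul_inv_cancel₀ hc0, one_smul]
  exact hBB ▸ Matrix.posSemidef_conjTranspose_mul_self B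

lemma charpoly_eq (n : ℕ) (hn : 2 ≤ n) :
    (choiMapBlock n).charpoly = X * (X - C ((n : ℂ) - 1)) ^ (n * (n - 1) - 1) := by
  apply Polynomial.eq_of_infinite_eval_eq
  apply Set.Infinite.mono (s := {((n : ℂ) - 1)}ᶜ)
  · intro t ht
    have ht' : t ≠ (n : ℂ) - 1 := by simpa using ht
    simp only [Set.mem_setOf_eq, eval_charpoly', det_key n hn t ht', eval_mul, eval_pow,
      eval_sub, eval_X, eval_C]
  · exact (Set.finite_singleton _).infinite_compl

end ChoiAux

theorem choiMap_block_posSemidef_and_eigenvalues (n : ℕ) (hn : 2 ≤ n) :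
    (choiMapBlock n).PosSemidef ∧
      (choiMapBlock n).charpoly =
        X * (X - C ((n : ℂ) - 1)) ^ (n * (n - 1) - 1) := by
  exact ⟨ChoiAux.posSemidef n hn, ChoiAux.charpoly_eq n hn⟩
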